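/- Let b ≥ 2, s ≥ 1, n ≥ 2, and let P_n = (V_1,…,V_n) be points in [0,1)^s such that for each j the j-th coordinates V_{1,j},…,V_{n,j} are pairwise distinct, with associated function ψ. Then for every k ∈ ℕ^s, the Lebesgue integral of ψ over (∏_{j=1}^s [0, b^{−k_j})) × (∏_{j=1}^s [0, b^{−k_j})) equals C_b(k;P_n) / b^{2|k|}. -/

import Mathlib

open MeasureTheory
open scoped Classical

noncomputable def gammaB (b : ℕ) (x y : ℝ) : ℕ∞ :=
  if x = y then ⊤
  else (↑(sInf {i : ℕ | ⌊(b : ℝ) ^ i * x⌋ = ⌊(b : ℝ) ^ i * y⌋ ∧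
      ⌊(b : ℝ) ^ (i + 1) * x⌋ ≠ ⌊(b : ℝ) ^ (i + 1) * y⌋}) : ℕ∞)

-- floor equality at level m
def Feq (b : ℕ) (m : ℕ) (x y : ℝ) : Prop := ⌊(b : ℝ) ^ m * x⌋ = ⌊(b : ℝ) ^ m * y⌋

lemma feq_mono {b : ℕ} (hb : 2 ≤ b) {x y : ℝ} (hx : 0 ≤ x) (hy : 0 ≤ y)
    {m m' : ℕ} (h : m ≤ m') (hf : Feq b m' x y) : Feq b m x y := by
  have hb0 : (0:ℝ) < (b:ℝ) := by positivity
  have key : ∀ z : ℝ, 0 ≤ z → ⌊(b:ℝ) ^ m * z⌋ = (⌊(b:ℝ)^m' * z⌋₊ / b ^ (m'-m) : ℕ) := by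
    intro z hz
    have h1 : (b:ℝ) ^ m * z = ((b:ℝ)^m' * z) / ((b ^ (m'-m) : ℕ) : ℝ) := by
      push_cast
      rw [eq_div_iff (by positivity)]
      rw [mul_comm ((b:ℝ)^m) z, mul_assoc, ← pow_add, Nat.add_sub_cancel' h, mul_comm]
    rw [h1, ← Int.natCast_floor_eq_floor (by positivity), Nat.floor_div_natCast]
  unfold Feq
  rw [key x hx, key y hy]
  unfold Feq at hf
  rw [← Int.natCast_floor_eq_floor (by positivity), ← Int.natCast_floor_eq_floor (by positivity)] at hf
  norm_cast at hf ⊢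
  rw [hf]

lemma gammaB_eq_top_iff {b : ℕ} {x y : ℝ} : gammaB b x y = ⊤ ↔ x = y := by
  unfold gammaB
  split
  · simpa
  · simp_all

lemma gammaB_eq_iff {b : ℕ} (hb : 2 ≤ b) {x y : ℝ} (hx : x ∈ Set.Ico (0:ℝ) 1)
    (hy : y ∈ Set.Ico (0:ℝ) 1) (i : ℕ) :
    gammaB b x y = (i : ℕ∞) ↔ (Feq b i x y ∧ ¬ Feq b (i+1) x y) := by
  rcases eq_or_ne x y with rfl | hxy
  · simp only [gammaB, if_pos rfl]
    constructor
    · intro h; exact absurd h (by simp)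
    · rintro ⟨-, h2⟩; exact absurd rfl h2
  · have hb1 : (1:ℝ) < (b:ℝ) := by exact_mod_cast Nat.lt_of_lt_of_le one_lt_two hb
    -- the set of levels where floors differ
    set T : Set ℕ := {m | ¬ Feq b m x y} with hT
    have hTne : T.Nonempty := by
      by_contra h
      push_neg at h
      have hall : ∀ m, Feq b m x y := by
        intro m; by_contra hm
        have : m ∈ T := hm
        rw [h] at this
        exact this
      apply hxy
      have hd : ∀ m : ℕ, |x - y| < ((b:ℝ)^m)⁻¹ := by
        intro m
        have := hall m
        unfold Feq at this
        have h2 : |(b:ℝ)^m * x - (b:ℝ)^m * y| < 1 := Int.abs_sub_lt_one_of_floor_eq_floor this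
        rw [← mul_sub, abs_mul, abs_of_pos (by positivity)] at h2
        rw [inv_eq_one_div, lt_div_iff₀ (by positivity)]
        nlinarith [h2]
      by_contra hne
      obtain ⟨m, hm⟩ := pow_unbounded_of_one_lt (|x - y|)⁻¹ hb1
      have h1 : (0:ℝ) < |x - y| := abs_pos.mpr (sub_ne_zero.mpr hne)
      have := hd m
      rw [lt_inv_comm₀ h1 (by positivity)] at this
      linarith
    set N := sInf T with hN
    have hNmem : N ∈ T := Nat.sInf_mem hTne
    have hN0 : N ≠ 0 := by
      intro h
      apply hNmem
      rw [h]
      unfold Feq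
      simp only [pow_zero, one_mul]
      rw [Int.floor_eq_zero_iff.mpr hx, Int.floor_eq_zero_iff.mpr hy]
    have hfeq_lt : ∀ m, m < N → Feq b m x y := by
      intro m hm
      by_contra h
      exact absurd (Nat.sInf_le h) (not_le.mpr hm)
    -- S is the singleton {N-1}
    have hS : {i : ℕ | ⌊(b : ℝ) ^ i * x⌋ = ⌊(b : ℝ) ^ i * y⌋ ∧
        ⌊(b : ℝ) ^ (i + 1) * x⌋ ≠ ⌊(b : ℝ) ^ (i + 1) * y⌋} = {N - 1} := by
      ext j
      simp only [Set.mem_setOf_eq, Set.mem_singleton_iff]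
      constructor
      · rintro ⟨h1, h2⟩
        have hjN : j < N := by
          by_contra h
          push_neg at h
          exact hNmem (feq_mono hb hx.1 hy.1 h h1)
        have hNj : N ≤ j + 1 := by
          by_contra h
          push_neg at h
          exact h2 (hfeq_lt _ h)
        omega
      · rintro rfl
        refine ⟨hfeq_lt _ (by omega), ?_⟩
        have : N - 1 + 1 = N := by omega
        rw [this]
        exact hNmem
    constructor
    · intro h
      simp only [gammaB, if_neg hxy] at h
      have : sInf {i : ℕ | ⌊(b : ℝ) ^ i * x⌋ = ⌊(b : ℝ) ^ i * y⌋ ∧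
          ⌊(b : ℝ) ^ (i + 1) * x⌋ ≠ ⌊(b : ℝ) ^ (i + 1) * y⌋} = i := by exact_mod_cast h
      rw [hS] at this
      simp only [csInf_singleton] at this
      subst this
      constructor
      · exact hfeq_lt _ (by omega)
      · have : N - 1 + 1 = N := by omega
        rw [this]; exact hNmem
    · rintro ⟨h1, h2⟩
      have : i ∈ ({N - 1} : Set ℕ) := hS ▸ Set.mem_setOf_eq ▸ ⟨h1, h2⟩
      simp only [Set.mem_singleton_iff] at this
      subst this
      simp only [gammaB, if_neg hxy, hS]
      simp

def sqSet (b m c : ℕ) : Set (ℝ × ℝ) :=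
  (Set.Ico ((c:ℝ)/(b:ℝ)^m) (((c:ℝ)+1)/(b:ℝ)^m)) ×ˢ
    (Set.Ico ((c:ℝ)/(b:ℝ)^m) (((c:ℝ)+1)/(b:ℝ)^m))

def Eset (b m k : ℕ) : Set (ℝ × ℝ) :=
  {q | q.1 ∈ Set.Ico 0 (((b:ℝ)^k)⁻¹) ∧ q.2 ∈ Set.Ico 0 (((b:ℝ)^k)⁻¹) ∧ Feq b m q.1 q.2}

def Aset (b i k : ℕ) : Set (ℝ × ℝ) :=
  {q | q.1 ∈ Set.Ico 0 (((b:ℝ)^k)⁻¹) ∧ q.2 ∈ Set.Ico 0 (((b:ℝ)^k)⁻¹) ∧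
    gammaB b q.1 q.2 = (i : ℕ∞)}

lemma mem_Ico_sq_iff {b m : ℕ} (hb : 2 ≤ b) {z : ℝ} (hz : 0 ≤ z) (c : ℕ) :
    z ∈ Set.Ico ((c:ℝ)/(b:ℝ)^m) (((c:ℝ)+1)/(b:ℝ)^m) ↔ ⌊(b:ℝ)^m * z⌋₊ = c := by
  have hbm : (0:ℝ) < (b:ℝ)^m := by positivity
  rw [Nat.floor_eq_iff (by positivity)]
  constructor
  · rintro ⟨h1, h2⟩
    constructor
    · rw [div_le_iff₀ hbm] at h1; nlinarith
    · rw [lt_div_iff₀ hbm] at h2; push_cast; nlinarith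
  · rintro ⟨h1, h2⟩
    constructor
    · rw [div_le_iff₀ hbm]; nlinarith
    · rw [lt_div_iff₀ hbm]; push_cast at h2 ⊢; nlinarith

lemma Eset_eq {b m k : ℕ} (hb : 2 ≤ b) (hkm : k ≤ m) :
    Eset b m k = ⋃ c ∈ Finset.range (b^(m-k)), sqSet b m c := by
  have hbm : (0:ℝ) < (b:ℝ)^m := by positivity
  have hbk : (0:ℝ) < (b:ℝ)^k := by positivity
  ext ⟨x, y⟩
  simp only [Eset, sqSet, Set.mem_setOf_eq, Set.mem_iUnion, Finset.mem_range,
    Set.mem_prod, exists_prop]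
  constructor
  · rintro ⟨⟨hx0, hx1⟩, ⟨hy0, hy1⟩, hf⟩
    refine ⟨⌊(b:ℝ)^m * x⌋₊, ?_, ?_, ?_⟩
    · have h1 : (b:ℝ)^m * x < (b:ℝ)^(m-k) := by
        have : (b:ℝ)^m * ((b:ℝ)^k)⁻¹ = (b:ℝ)^(m-k) := by
          rw [← Nat.sub_add_cancel hkm, pow_add]
          field_simp
          rw [Nat.add_sub_cancel]
        nlinarith
      have h2 : (⌊(b:ℝ)^m * x⌋₊ : ℝ) < (b:ℝ)^(m-k) :=
        lt_of_le_of_lt (Nat.floor_le (by positivity)) h1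
      exact_mod_cast (by push_cast at h2 ⊢; exact h2 : (⌊(b:ℝ)^m * x⌋₊ : ℝ) < ((b^(m-k) : ℕ) : ℝ))
    · exact (mem_Ico_sq_iff hb hx0 _).mpr rfl
    · refine (mem_Ico_sq_iff hb hy0 _).mpr ?_
      unfold Feq at hf
      have hx' := Int.natCast_floor_eq_floor (a := (b:ℝ)^m * x) (by positivity)
      have hy' := Int.natCast_floor_eq_floor (a := (b:ℝ)^m * y) (by positivity)
      have : (⌊(b:ℝ)^m * y⌋₊ : ℤ) = (⌊(b:ℝ)^m * x⌋₊ : ℤ) := by rw [hx', hy', hf]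
      exact_mod_cast this
  · rintro ⟨c, hc, ⟨hx1, hx2⟩, ⟨hy1, hy2⟩⟩
    have hc1 : ((c:ℝ)+1)/(b:ℝ)^m ≤ ((b:ℝ)^k)⁻¹ := by
      have h1 : ((c:ℝ)+1) ≤ (b:ℝ)^(m-k) := by
        have : (c+1 : ℕ) ≤ b^(m-k) := hc
        exact_mod_cast this
      rw [div_le_iff₀ hbm, inv_mul_eq_div, le_div_iff₀ (by positivity)]
      calc ((c:ℝ)+1) * (b:ℝ)^k ≤ (b:ℝ)^(m-k) * (b:ℝ)^k := by nlinarith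
        _ = (b:ℝ)^m := by rw [← pow_add, Nat.sub_add_cancel hkm]
    have hx0 : 0 ≤ x := le_trans (by positivity) hx1
    have hy0 : 0 ≤ y := le_trans (by positivity) hy1
    refine ⟨⟨hx0, lt_of_lt_of_le hx2 hc1⟩, ⟨hy0, lt_of_lt_of_le hy2 hc1⟩, ?_⟩
    unfold Feq
    have hxc := (mem_Ico_sq_iff hb hx0 c).mp ⟨hx1, hx2⟩
    have hyc := (mem_Ico_sq_iff hb hy0 c).mp ⟨hy1, hy2⟩
    rw [← Int.natCast_floor_eq_floor (a := (b:ℝ)^m * x) (by positivity),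
      ← Int.natCast_floor_eq_floor (a := (b:ℝ)^m * y) (by positivity), hxc, hyc]

lemma volume_sqSet {b : ℕ} (hb : 2 ≤ b) (m c : ℕ) :
    volume (sqSet b m c) = ENNReal.ofReal (((b:ℝ)^m)⁻¹) * ENNReal.ofReal (((b:ℝ)^m)⁻¹) := by
  unfold sqSet
  rw [Measure.volume_eq_prod, Measure.prod_prod, Real.volume_Ico]
  have : ((c:ℝ)+1)/(b:ℝ)^m - (c:ℝ)/(b:ℝ)^m = ((b:ℝ)^m)⁻¹ := by
    field_simp
    ring
  rw [this]

lemma measurableSet_sqSet (b m c : ℕ) : MeasurableSet (sqSet b m c) :=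
  (measurableSet_Ico).prod (measurableSet_Ico)

lemma measurableSet_Eset {b m k : ℕ} (hb : 2 ≤ b) (hkm : k ≤ m) :
    MeasurableSet (Eset b m k) := by
  rw [Eset_eq hb hkm]
  exact (Finset.range _).measurableSet_biUnion fun c _ => measurableSet_sqSet b m c

lemma volume_Eset {b m k : ℕ} (hb : 2 ≤ b) (hkm : k ≤ m) :
    volume (Eset b m k) = ENNReal.ofReal (((b:ℝ)^(m+k))⁻¹) := by
  rw [Eset_eq hb hkm, measure_biUnion_finset ?_ (fun c _ => measurableSet_sqSet b m c)]
  · simp_rw [volume_sqSet hb]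
    rw [Finset.sum_const, Finset.card_range, nsmul_eq_mul]
    rw [← ENNReal.ofReal_natCast, ← ENNReal.ofReal_mul (by positivity),
      ← ENNReal.ofReal_mul (by positivity)]
    congr 1
    have hbm : (0:ℝ) < (b:ℝ)^m := by positivity
    have h1 : ((b ^ (m-k) : ℕ) : ℝ) = (b:ℝ)^(m-k) := by push_cast; ring
    rw [h1]
    have hbm' : ((b:ℝ)^m) ≠ 0 := by positivity
    have hbmk : ((b:ℝ)^(m+k)) ≠ 0 := by positivity
    field_simp
    rw [← pow_mul, ← pow_add, show m - k + (m + k) = m * 2 by omega]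
  · intro c hc c' hc' hne
    simp only [Function.onFun]
    rw [Set.disjoint_left]
    rintro ⟨x, y⟩ ⟨hx, -⟩ ⟨hx', -⟩
    have h0x : (0:ℝ) ≤ x := le_trans (by positivity) hx.1
    have := (mem_Ico_sq_iff hb h0x c).mp hx
    have := (mem_Ico_sq_iff hb h0x c').mp hx'
    exact hne (by omega)

lemma Aset_eq_diff {b i k : ℕ} (hb : 2 ≤ b) (hki : k ≤ i) :
    Aset b i k = Eset b i k \ Eset b (i+1) k := by
  have hble : ((b:ℝ)^k)⁻¹ ≤ 1 := by
    rw [inv_le_one_iff₀]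
    right
    exact one_le_pow₀ (by exact_mod_cast le_trans one_le_two hb)
  ext ⟨x, y⟩
  simp only [Aset, Eset, Set.mem_setOf_eq, Set.mem_diff]
  constructor
  · rintro ⟨hx, hy, hg⟩
    have hx1 : x ∈ Set.Ico (0:ℝ) 1 := ⟨hx.1, lt_of_lt_of_le hx.2 hble⟩
    have hy1 : y ∈ Set.Ico (0:ℝ) 1 := ⟨hy.1, lt_of_lt_of_le hy.2 hble⟩
    obtain ⟨h1, h2⟩ := (gammaB_eq_iff hb hx1 hy1 i).mp hg
    exact ⟨⟨hx, hy, h1⟩, fun h => h2 h.2.2⟩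
  · rintro ⟨⟨hx, hy, h1⟩, h2⟩
    have hx1 : x ∈ Set.Ico (0:ℝ) 1 := ⟨hx.1, lt_of_lt_of_le hx.2 hble⟩
    have hy1 : y ∈ Set.Ico (0:ℝ) 1 := ⟨hy.1, lt_of_lt_of_le hy.2 hble⟩
    exact ⟨hx, hy, (gammaB_eq_iff hb hx1 hy1 i).mpr ⟨h1, fun h => h2 ⟨hx, hy, h⟩⟩⟩

lemma Aset_empty {b i k : ℕ} (hb : 2 ≤ b) (hik : i < k) : Aset b i k = ∅ := by
  ext ⟨x, y⟩
  simp only [Aset, Set.mem_setOf_eq, Set.mem_empty_iff_false, iff_false, not_and]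
  rintro hx hy hg
  have hble : ((b:ℝ)^k)⁻¹ ≤ 1 := by
    rw [inv_le_one_iff₀]; right
    exact one_le_pow₀ (by exact_mod_cast le_trans one_le_two hb)
  have hx1 : x ∈ Set.Ico (0:ℝ) 1 := ⟨hx.1, lt_of_lt_of_le hx.2 hble⟩
  have hy1 : y ∈ Set.Ico (0:ℝ) 1 := ⟨hy.1, lt_of_lt_of_le hy.2 hble⟩
  obtain ⟨-, h2⟩ := (gammaB_eq_iff hb hx1 hy1 i).mp hg
  apply h2
  -- Feq (i+1) holds since both b^(i+1)*x, b^(i+1)*y ∈ [0,1)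
  have key : ∀ z : ℝ, z ∈ Set.Ico (0:ℝ) (((b:ℝ)^k)⁻¹) → ⌊(b:ℝ)^(i+1) * z⌋ = 0 := by
    rintro z ⟨hz0, hz1⟩
    rw [Int.floor_eq_zero_iff]
    constructor
    · positivity
    · have h1 : (b:ℝ)^(i+1) * z < (b:ℝ)^(i+1) * ((b:ℝ)^k)⁻¹ := by
        apply mul_lt_mul_of_pos_left hz1 (by positivity)
      have h2 : (b:ℝ)^(i+1) ≤ (b:ℝ)^k :=
        pow_le_pow_right₀ (by exact_mod_cast le_trans one_le_two hb) (by omega)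
      calc (b:ℝ)^(i+1) * z < (b:ℝ)^(i+1) * ((b:ℝ)^k)⁻¹ := h1
        _ ≤ (b:ℝ)^k * ((b:ℝ)^k)⁻¹ := by
            apply mul_le_mul_of_nonneg_right h2 (by positivity)
        _ = 1 := by field_simp
  unfold Feq
  rw [key x hx, key y hy]

lemma measurableSet_Aset {b : ℕ} (hb : 2 ≤ b) (i k : ℕ) : MeasurableSet (Aset b i k) := by
  rcases lt_or_ge i k with h | h
  · rw [Aset_empty hb h]; exact MeasurableSet.empty
  · rw [Aset_eq_diff hb h]
    exact (measurableSet_Eset hb h).diff (measurableSet_Eset hb (by omega))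

lemma volume_Aset {b i k : ℕ} (hb : 2 ≤ b) (hki : k ≤ i) :
    volume (Aset b i k) = ENNReal.ofReal (((b:ℝ)-1) * ((b:ℝ)^(i+k+1))⁻¹) := by
  have hb1 : (1:ℝ) ≤ (b:ℝ) := by exact_mod_cast le_trans one_le_two hb
  rw [Aset_eq_diff hb hki]
  have hsub : Eset b (i+1) k ⊆ Eset b i k := by
    rintro ⟨x, y⟩ ⟨hx, hy, hf⟩
    exact ⟨hx, hy, feq_mono hb hx.1 hy.1 (by omega) hf⟩
  rw [measure_diff hsub (measurableSet_Eset hb (by omega)).nullMeasurableSet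
    (by rw [volume_Eset hb (by omega)]; exact ENNReal.ofReal_ne_top)]
  rw [volume_Eset hb hki, volume_Eset hb (by omega)]
  rw [← ENNReal.ofReal_sub _ (by positivity)]
  congr 1
  have h1 : (0:ℝ) < (b:ℝ)^(i+k) := by positivity
  have h2 : (0:ℝ) < (b:ℝ)^(i+1+k) := by positivity
  have h3 : (i+1)+k = i+k+1 := by omega
  rw [h3, pow_succ]
  have h4 : ((b:ℝ)^(i+k)) ≠ 0 := by positivity
  field_simp

noncomputable def mB {n s : ℕ} (b : ℕ) (P : Fin n → Fin s → ℝ) (k : Fin s → ℕ) (l : Fin n) : ℕ :=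
  (Finset.univ.filter fun j : Fin n =>
    j ≠ l ∧ ∀ r : Fin s, (k r : ℕ∞) ≤ gammaB b (P l r) (P j r)).card

noncomputable def nB {n s : ℕ} (b : ℕ) (P : Fin n → Fin s → ℝ) (i : Fin s → ℕ) (l : Fin n) : ℕ :=
  (Finset.univ.filter fun j : Fin n =>
    j ≠ l ∧ ∀ r : Fin s, gammaB b (P l r) (P j r) = (i r : ℕ∞)).card

noncomputable def MB {n s : ℕ} (b : ℕ) (P : Fin n → Fin s → ℝ) (k : Fin s → ℕ) : ℕ :=
  ∑ l : Fin n, mB b P k l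

noncomputable def NB {n s : ℕ} (b : ℕ) (P : Fin n → Fin s → ℝ) (i : Fin s → ℕ) : ℕ :=
  ∑ l : Fin n, nB b P i l

noncomputable def CB {n s : ℕ} (b : ℕ) (P : Fin n → Fin s → ℝ) (k : Fin s → ℕ) : ℝ :=
  (b : ℝ) ^ (∑ j, k j) * (MB b P k : ℝ) / ((n : ℝ) * ((n : ℝ) - 1))

def DsetS (b s : ℕ) (i : Fin s → ℕ) : Set ((Fin s → ℝ) × (Fin s → ℝ)) :=
  {p | (∀ j, p.1 j ∈ Set.Ico (0 : ℝ) 1) ∧ (∀ j, p.2 j ∈ Set.Ico (0 : ℝ) 1) ∧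
    ∀ j, gammaB b (p.1 j) (p.2 j) = (i j : ℕ∞)}

def Rset (s : ℕ) (x y : Fin s → ℝ) : Set ((Fin s → ℝ) × (Fin s → ℝ)) :=
  (Set.univ.pi fun j => Set.Ico 0 (x j)) ×ˢ (Set.univ.pi fun j => Set.Ico 0 (y j))

noncomputable def ViS (b s : ℕ) (i : Fin s → ℕ) (x y : Fin s → ℝ) : ℝ :=
  (volume (Rset s x y ∩ DsetS b s i)).toReal

noncomputable def psi {n s : ℕ} (b : ℕ) (P : Fin n → Fin s → ℝ) (x y : Fin s → ℝ) : ℝ :=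
  if ∀ j, gammaB b (x j) (y j) ≠ ⊤ then
    (NB b P (fun j => (gammaB b (x j) (y j)).toNat) : ℝ) *
      (b : ℝ) ^ (s + ∑ j, (gammaB b (x j) (y j)).toNat) /
      (((b : ℝ) - 1) ^ s * ((n : ℝ) * ((n : ℝ) - 1)))
  else 0

def pairSet (s : ℕ) (A : Fin s → Set (ℝ × ℝ)) : Set ((Fin s → ℝ) × (Fin s → ℝ)) :=
  {p | ∀ j, (p.1 j, p.2 j) ∈ A j}

lemma measurableSet_pairSet {s : ℕ} {A : Fin s → Set (ℝ × ℝ)}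
    (hA : ∀ j, MeasurableSet (A j)) : MeasurableSet (pairSet s A) := by
  have : pairSet s A = ⋂ j, (fun p : (Fin s → ℝ) × (Fin s → ℝ) => (p.1 j, p.2 j)) ⁻¹' A j := by
    ext p; simp [pairSet]
  rw [this]
  exact MeasurableSet.iInter fun j =>
    (((measurable_pi_apply j).comp measurable_fst).prodMk
      ((measurable_pi_apply j).comp measurable_snd)) (hA j)

lemma volume_pairSet {s : ℕ} {A : Fin s → Set (ℝ × ℝ)}
    (hA : ∀ j, MeasurableSet (A j)) :
    volume (pairSet s A) = ∏ j, volume (A j) := by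
  have hmp := volume_measurePreserving_arrowProdEquivProdArrow ℝ ℝ (Fin s)
  have hset : (MeasurableEquiv.arrowProdEquivProdArrow ℝ ℝ (Fin s)) ⁻¹' (pairSet s A)
      = Set.univ.pi A := by
    ext g
    simp [pairSet, MeasurableEquiv.arrowProdEquivProdArrow, Equiv.arrowProdEquivProdArrow,
      Set.mem_pi]
  rw [← hmp.measure_preimage (measurableSet_pairSet hA).nullMeasurableSet, hset,
    volume_pi_pi]

def Gset (s b : ℕ) (i : Fin s → ℕ) : Set ((Fin s → ℝ) × (Fin s → ℝ)) :=
  {p | ∀ j, gammaB b (p.1 j) (p.2 j) = (i j : ℕ∞)}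

lemma Gset_inter_Rset {s b : ℕ} (i k : Fin s → ℕ) :
    Gset s b i ∩ Rset s (fun j => ((b : ℝ) ^ k j)⁻¹) (fun j => ((b : ℝ) ^ k j)⁻¹)
      = pairSet s (fun j => Aset b (i j) (k j)) := by
  ext ⟨x, y⟩
  simp only [Gset, Rset, pairSet, Set.mem_inter_iff, Set.mem_setOf_eq, Set.mem_prod,
    Set.mem_pi, Set.mem_univ, forall_const, Aset]
  constructor
  · rintro ⟨hg, hx, hy⟩
    exact fun j => ⟨hx j, hy j, hg j⟩
  · intro h
    exact ⟨fun j => (h j).2.2, fun j => (h j).1, fun j => (h j).2.1⟩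

lemma gammaB_ne_top_of_ne {b : ℕ} {x y : ℝ} (h : x ≠ y) : gammaB b x y ≠ ⊤ :=
  fun ht => h (gammaB_eq_top_iff.mp ht)

lemma mB_eq_sum {n s b : ℕ} (hb : 2 ≤ b) (P : Fin n → Fin s → ℝ)
    (hdist : ∀ j : Fin s, Function.Injective fun i => P i j) (hs : 1 ≤ s)
    (k : Fin s → ℕ) (l : Fin n) :
    mB b P k l = ∑ i ∈ (Finset.image
        (fun lj : Fin n × Fin n => fun r => (gammaB b (P lj.1 r) (P lj.2 r)).toNat)
        Finset.univ.offDiag).filter (fun i => ∀ r, k r ≤ i r),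
      nB b P i l := by
  classical
  unfold mB
  rw [Finset.card_eq_sum_card_fiberwise
    (f := fun j : Fin n => fun r => (gammaB b (P l r) (P j r)).toNat)
    (t := (Finset.image
        (fun lj : Fin n × Fin n => fun r => (gammaB b (P lj.1 r) (P lj.2 r)).toNat)
        Finset.univ.offDiag).filter (fun i => ∀ r, k r ≤ i r))]
  · apply Finset.sum_congr rfl
    intro i hi
    rw [Finset.mem_filter] at hi
    obtain ⟨hiI, hik⟩ := hi
    unfold nB
    congr 1
    rw [Finset.filter_filter]
    apply Finset.filter_congr
    intro j _
    constructor
    · rintro ⟨⟨hjl, hk⟩, hfi⟩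
      refine ⟨hjl, fun r => ?_⟩
      have hne : gammaB b (P l r) (P j r) ≠ ⊤ :=
        gammaB_ne_top_of_ne (fun h => hjl ((hdist r h).symm ▸ rfl))
      have := congrFun hfi r
      rw [← this, ENat.coe_toNat hne]
    · rintro ⟨hjl, hg⟩
      refine ⟨⟨hjl, fun r => ?_⟩, funext fun r => ?_⟩
      · rw [hg r]; exact_mod_cast hik r
      · rw [hg r]; simp
  · intro j hj
    rw [Finset.mem_coe, Finset.mem_filter] at hj
    obtain ⟨-, hjl, hk⟩ := hj
    have hne : ∀ r, gammaB b (P l r) (P j r) ≠ ⊤ := fun r =>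
      gammaB_ne_top_of_ne (fun h => hjl ((hdist r h).symm ▸ rfl))
    rw [Finset.mem_coe, Finset.mem_filter]
    constructor
    · rw [Finset.mem_image]
      exact ⟨(l, j), Finset.mem_offDiag.mpr ⟨Finset.mem_univ _, Finset.mem_univ _,
        fun h => hjl h.symm⟩, rfl⟩
    · intro r
      have := hk r
      rw [← ENat.coe_toNat (hne r)] at this
      exact_mod_cast this

theorem stmt15 (b n s : ℕ) (hb : 2 ≤ b) (hs : 1 ≤ s) (hn : 2 ≤ n)
    (P : Fin n → Fin s → ℝ) (hP : ∀ i j, P i j ∈ Set.Ico (0 : ℝ) 1)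
    (hdist : ∀ j : Fin s, Function.Injective fun i => P i j)
    (k : Fin s → ℕ) :
    ∫ p in Rset s (fun j => ((b : ℝ) ^ k j)⁻¹) (fun j => ((b : ℝ) ^ k j)⁻¹),
        psi b P p.1 p.2 = CB b P k / (b : ℝ) ^ (2 * ∑ j, k j) := by
  classical
  have hb1 : (1:ℝ) ≤ (b:ℝ) := by exact_mod_cast le_trans one_le_two hb
  have hb2 : (2:ℝ) ≤ (b:ℝ) := by exact_mod_cast hb
  set R := Rset s (fun j => ((b : ℝ) ^ k j)⁻¹) (fun j => ((b : ℝ) ^ k j)⁻¹) with hR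
  set Idx : Finset (Fin s → ℕ) := Finset.image
    (fun lj : Fin n × Fin n => fun r => (gammaB b (P lj.1 r) (P lj.2 r)).toNat)
    Finset.univ.offDiag with hIdx
  set c : (Fin s → ℕ) → ℝ := fun i => (NB b P i : ℝ) * (b:ℝ)^(s + ∑ j, i j) /
    (((b:ℝ)-1)^s * ((n:ℝ)*((n:ℝ)-1))) with hc
  -- measurability and volume of the pieces
  have hGR : ∀ i : Fin s → ℕ, Gset s b i ∩ R = pairSet s (fun j => Aset b (i j) (k j)) :=
    fun i => Gset_inter_Rset i k
  have hGRmeas : ∀ i : Fin s → ℕ, MeasurableSet (Gset s b i ∩ R) := fun i => by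
    rw [hGR]; exact measurableSet_pairSet fun j => measurableSet_Aset hb _ _
  have hGRvol : ∀ i : Fin s → ℕ, volume (Gset s b i ∩ R)
      = ∏ j, volume (Aset b (i j) (k j)) := fun i => by
    rw [hGR]; exact volume_pairSet fun j => measurableSet_Aset hb _ _
  have hAvol_ne_top : ∀ i' k' : ℕ, volume (Aset b i' k') ≠ ⊤ := by
    intro i' k'
    rcases lt_or_ge i' k' with h | h
    · rw [Aset_empty hb h]; simp
    · rw [volume_Aset hb h]; exact ENNReal.ofReal_ne_top
  have hGRfin : ∀ i : Fin s → ℕ, volume (Gset s b i ∩ R) ≠ ⊤ := fun i => by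
    rw [hGRvol]
    exact (ENNReal.prod_lt_top fun j _ => (hAvol_ne_top _ _).lt_top).ne
  have hmeasR : MeasurableSet R :=
    (MeasurableSet.univ_pi fun j => measurableSet_Ico).prod
      (MeasurableSet.univ_pi fun j => measurableSet_Ico)
  -- pointwise identity on R
  have hpt : Set.EqOn (fun p : (Fin s → ℝ) × (Fin s → ℝ) => psi b P p.1 p.2)
      (fun p => ∑ i ∈ Idx, (Gset s b i ∩ R).indicator (fun _ => c i) p) R := by
    intro p hp
    simp only
    by_cases hfin : ∀ j, gammaB b (p.1 j) (p.2 j) ≠ ⊤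
    · set v : Fin s → ℕ := fun j => (gammaB b (p.1 j) (p.2 j)).toNat with hv
      have hmemG : ∀ i : Fin s → ℕ, p ∈ Gset s b i ↔ i = v := by
        intro i
        constructor
        · intro h
          funext j
          have := h j
          rw [← ENat.coe_toNat (hfin j)] at this
          exact_mod_cast this.symm
        · rintro rfl
          intro j
          rw [hv]
          simp only
          rw [ENat.coe_toNat (hfin j)]
      have hpsi : psi b P p.1 p.2 = c v := by rw [psi, if_pos hfin]
      rw [hpsi]
      by_cases hvI : v ∈ Idx
      · rw [Finset.sum_eq_single_of_mem v hvI]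
        · rw [Set.indicator_of_mem (Set.mem_inter ((hmemG v).mpr rfl) hp)]
        · intro i _ hne
          apply Set.indicator_of_notMem
          rintro ⟨hg, -⟩
          exact hne ((hmemG i).mp hg)
      · have hNv : NB b P v = 0 := by
          by_contra hN
          have : ∃ l, nB b P v l ≠ 0 := by
            by_contra hall
            push_neg at hall
            exact hN (by simp [NB, hall])
          obtain ⟨l, hl⟩ := this
          rw [nB] at hl
          obtain ⟨j, hj⟩ := Finset.card_ne_zero.mp hl
          rw [Finset.mem_filter] at hj
          obtain ⟨-, hjl, hg⟩ := hj
          apply hvI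
          rw [hIdx, Finset.mem_image]
          refine ⟨(l, j), Finset.mem_offDiag.mpr ⟨Finset.mem_univ _, Finset.mem_univ _,
            fun h => hjl h.symm⟩, ?_⟩
          funext r
          rw [hg r]
          simp
        have hcv : c v = 0 := by rw [hc]; simp [hNv]
        rw [hcv]
        symm
        apply Finset.sum_eq_zero
        intro i hi
        apply Set.indicator_of_notMem
        rintro ⟨hg, -⟩
        exact hvI (((hmemG i).mp hg) ▸ hi)
    · rw [psi, if_neg hfin]
      symm
      apply Finset.sum_eq_zero
      intro i _
      apply Set.indicator_of_notMem
      rintro ⟨hg, -⟩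
      apply hfin
      intro j
      rw [hg j]
      exact (ENat.coe_ne_top _)
  rw [setIntegral_congr_fun hmeasR hpt]
  rw [integral_finset_sum _ (fun i _ => by
    rw [integrable_indicator_iff (hGRmeas i)]
    exact (integrableOn_const_iff).mpr (Or.inr (lt_of_le_of_lt
      (le_trans (Measure.restrict_apply_le _ _) le_rfl) (hGRfin i).lt_top)))]
  have hterm : ∀ i ∈ Idx, ∫ p in R, (Gset s b i ∩ R).indicator (fun _ => c i) p
      = (volume (Gset s b i ∩ R)).toReal * c i := by
    intro i _
    rw [setIntegral_indicator (hGRmeas i)]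
    rw [setIntegral_const, smul_eq_mul, measureReal_def]
    congr 2
    rw [Set.inter_eq_right.mpr (Set.inter_subset_right)]
  rw [Finset.sum_congr rfl hterm]
  have hbne : (b:ℝ) ≠ 0 := by linarith
  have hb1ne : (b:ℝ) - 1 ≠ 0 := by linarith
  have hnne : (n:ℝ) * ((n:ℝ) - 1) ≠ 0 := by
    have h2 : (2:ℝ) ≤ (n:ℝ) := by exact_mod_cast hn
    have : (n:ℝ) - 1 ≥ 1 := by linarith
    positivity
  set X : ℝ := ((b:ℝ)^(∑ j, k j))⁻¹ / ((n:ℝ)*((n:ℝ)-1)) with hX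
  have hterm2 : ∀ i : Fin s → ℕ, (volume (Gset s b i ∩ R)).toReal * c i
      = if ∀ r, k r ≤ i r then (NB b P i : ℝ) * X else 0 := by
    intro i
    by_cases hik : ∀ r, k r ≤ i r
    · rw [if_pos hik, hGRvol]
      have hA : ∀ j, volume (Aset b (i j) (k j))
          = ENNReal.ofReal (((b:ℝ)-1) * ((b:ℝ)^(i j + k j + 1))⁻¹) :=
        fun j => volume_Aset hb (hik j)
      simp_rw [hA]
      rw [ENNReal.toReal_prod]
      have hnn : ∀ j : Fin s, ENNReal.toReal (ENNReal.ofReal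
          (((b:ℝ)-1) * ((b:ℝ)^(i j + k j + 1))⁻¹))
          = ((b:ℝ)-1) * ((b:ℝ)^(i j + k j + 1))⁻¹ := fun j =>
        ENNReal.toReal_ofReal (mul_nonneg (by linarith) (by positivity))
      simp_rw [hnn]
      rw [Finset.prod_mul_distrib, Finset.prod_const, Finset.prod_inv_distrib,
        Finset.prod_pow_eq_pow_sum]
      have hexp : ∑ j : Fin s, (i j + k j + 1) = (∑ j, i j) + (∑ j, k j) + s := by
        rw [Finset.sum_add_distrib, Finset.sum_add_distrib, Finset.sum_const,
          Finset.card_univ, Fintype.card_fin, smul_eq_mul, mul_one]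
      rw [hexp]
      rw [hc, hX]
      simp only [Finset.card_univ, Fintype.card_fin]
      have e1 : (b:ℝ)^((∑ j, i j) + (∑ j, k j) + s)
          = (b:ℝ)^(∑ j, i j) * (b:ℝ)^(∑ j, k j) * (b:ℝ)^s := by
        rw [pow_add, pow_add]
      have e2 : (b:ℝ)^(s + ∑ j, i j) = (b:ℝ)^s * (b:ℝ)^(∑ j, i j) := pow_add _ _ _
      rw [e1, e2]
      have hbs : (b:ℝ)^s ≠ 0 := by positivity
      have hbi : (b:ℝ)^(∑ j, i j) ≠ 0 := by positivity
      have hbk : (b:ℝ)^(∑ j, k j) ≠ 0 := by positivity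
      have hb1s : ((b:ℝ)-1)^s ≠ 0 := pow_ne_zero _ hb1ne
      field_simp
    · rw [if_neg hik]
      push_neg at hik
      obtain ⟨r, hr⟩ := hik
      have h0 : volume (Gset s b i ∩ R) = 0 := by
        rw [hGRvol]
        apply Finset.prod_eq_zero (Finset.mem_univ r)
        rw [Aset_empty hb hr]
        simp
      rw [h0]
      simp
  rw [Finset.sum_congr rfl (fun i _ => hterm2 i), ← Finset.sum_filter, ← Finset.sum_mul]
  have hMB : (MB b P k : ℝ)
      = ∑ i ∈ Idx.filter (fun i => ∀ r, k r ≤ i r), (NB b P i : ℝ) := by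
    have hm : ∀ l, (mB b P k l : ℝ)
        = ∑ i ∈ Idx.filter (fun i => ∀ r, k r ≤ i r), (nB b P i l : ℝ) := by
      intro l
      rw [mB_eq_sum hb P hdist hs k l]
      push_cast
      rfl
    rw [MB]
    push_cast
    rw [Finset.sum_congr rfl (fun l _ => hm l), Finset.sum_comm]
    apply Finset.sum_congr rfl
    intro i _
    rw [NB]
    push_cast
    rfl
  rw [← hMB, CB, hX]
  have h2m : (b:ℝ)^(2 * ∑ j, k j) = (b:ℝ)^(∑ j, k j) * (b:ℝ)^(∑ j, k j) := by
    rw [two_mul, pow_add]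
  rw [h2m]
  have hbk : (b:ℝ)^(∑ j, k j) ≠ 0 := by positivity
  field_simp
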